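/- For 4 ≤ m ≤ k ≤ 2m−2, the quotient algebra n = g_m / C^k g_m admits a 2-dimensional torus of semisimple derivations: the two diagonal linear maps t₁, t₂ defined on the basis by t₁(X̄₁) = X̄₁, t₁(X̄₂) = (k−1) X̄₂, t₁(X̄_j) = (k−3+j) X̄_j for 3 ≤ j ≤ k+1, t₁(X̄_{2m+1}) = (2k−1) X̄_{2m+1}, t₁(X̄_{2m+2}) = 2k X̄_{2m+2}, and t₂(X̄₁) = 0, t₂(X̄_j) = X̄_j for 2 ≤ j ≤ k+1, t₂(X̄_{2m+1}) = 2 X̄_{2m+1}, t₂(X̄_{2m+2}) = 2 X̄_{2m+2}, are both derivations of n and commute with each other. -/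
import Mathlib


/-- eigenvalue function for `t₁`. -/
noncomputable def stmt9lam1 (m k a : ℕ) : ℂ :=
  if a = 2*m+1 then 2*(k:ℂ)-1 else if a = 2*m+2 then 2*(k:ℂ)
  else if a = 1 then 1 else if a = 2 then (k:ℂ)-1 else (k:ℂ)-3+a

/-- eigenvalue function for `t₂`. -/
noncomputable def stmt9lam2 (k a : ℕ) : ℂ :=
  if a = 1 then 0 else if a ≤ k+1 then 1 else 2

/-- generic lemma: a diagonal map whose eigenvalues are additive across the
structure constants is a derivation. -/
theorem stmt9aux (m k : ℕ)
    (n : Type*) [LieRing n] [LieAlgebra ℂ n]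
    (Xb : ℕ → n)
    (idx : Fin (k + 3) → ℕ)
    (hidx : ∀ i : Fin (k + 3), idx i =
      if i.1 ≤ k then i.1 + 1 else if i.1 = k + 1 then 2 * m + 1 else 2 * m + 2)
    (hspan : Submodule.span ℂ (Set.range (fun i : Fin (k + 3) => Xb (idx i))) = ⊤)
    (h1 : ∀ j, 2 ≤ j → j ≤ k → ⁅Xb 1, Xb j⁆ = Xb (j + 1))
    (h3 : ⁅Xb 2, Xb 3⁆ = Xb (2 * m + 1))
    (h4 : ⁅Xb 2, Xb 4⁆ = Xb (2 * m + 2))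
    (h5 : ⁅Xb 1, Xb (2 * m + 1)⁆ = Xb (2 * m + 2))
    (h0 : ∀ i j, i ∈ Finset.Icc 1 (k + 1) ∪ {2 * m + 1, 2 * m + 2} →
      j ∈ Finset.Icc 1 (k + 1) ∪ {2 * m + 1, 2 * m + 2} → i < j →
      ¬(i = 1 ∧ 2 ≤ j ∧ j ≤ k) → ¬(i = 2 ∧ j = 3) → ¬(i = 2 ∧ j = 4) →
      ¬(i = 1 ∧ j = 2 * m + 1) → ⁅Xb i, Xb j⁆ = 0)
    (t : n →ₗ[ℂ] n) (lam : ℕ → ℂ)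
    (heig : ∀ a ∈ Finset.Icc 1 (k + 1) ∪ ({2 * m + 1, 2 * m + 2} : Finset ℕ),
      t (Xb a) = lam a • Xb a)
    (hs1 : ∀ b, 2 ≤ b → b ≤ k → lam 1 + lam b = lam (b + 1))
    (hs2 : lam 2 + lam 3 = lam (2 * m + 1))
    (hs3 : lam 2 + lam 4 = lam (2 * m + 2))
    (hs4 : lam 1 + lam (2 * m + 1) = lam (2 * m + 2)) :
    ∀ x y : n, t ⁅x, y⁆ = ⁅t x, y⁆ + ⁅x, t y⁆ := by
  set SS : Finset ℕ := Finset.Icc 1 (k + 1) ∪ {2 * m + 1, 2 * m + 2} with hSSdef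
  have hmem : ∀ c, 1 ≤ c → c ≤ k + 1 → c ∈ SS :=
    fun c hc1 hc2 => Finset.mem_union_left _ (Finset.mem_Icc.mpr ⟨hc1, hc2⟩)
  have hm1 : 2 * m + 1 ∈ SS := Finset.mem_union_right _ (by simp)
  have hm2 : 2 * m + 2 ∈ SS := Finset.mem_union_right _ (by simp)
  have hSSi : ∀ i : Fin (k + 3), idx i ∈ SS := by
    intro i
    rw [hidx i]
    split_ifs with hh hh'
    · exact hmem _ (by omega) (by omega)
    · exact hm1
    · exact hm2
  have hlt : ∀ a ∈ SS, ∀ b ∈ SS, a < b →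
      t ⁅Xb a, Xb b⁆ = ⁅t (Xb a), Xb b⁆ + ⁅Xb a, t (Xb b)⁆ := by
    intro a ha b hb hab
    have ea := heig a ha
    have eb := heig b hb
    by_cases c1 : a = 1 ∧ 2 ≤ b ∧ b ≤ k
    · obtain ⟨rfl, hb2, hbk⟩ := c1
      have hbr := h1 b hb2 hbk
      have ec := heig (b + 1) (hmem (b + 1) (by omega) (by omega))
      rw [hbr, ea, eb, ec, smul_lie, lie_smul, hbr, ← hs1 b hb2 hbk, add_smul]
    by_cases c2 : a = 2 ∧ b = 3
    · obtain ⟨rfl, rfl⟩ := c2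
      have ec := heig (2 * m + 1) hm1
      rw [h3, ea, eb, ec, smul_lie, lie_smul, h3, ← hs2, add_smul]
    by_cases c3 : a = 2 ∧ b = 4
    · obtain ⟨rfl, rfl⟩ := c3
      have ec := heig (2 * m + 2) hm2
      rw [h4, ea, eb, ec, smul_lie, lie_smul, h4, ← hs3, add_smul]
    by_cases c4 : a = 1 ∧ b = 2 * m + 1
    · obtain ⟨rfl, rfl⟩ := c4
      have ec := heig (2 * m + 2) hm2
      rw [h5, ea, eb, ec, smul_lie, lie_smul, h5, ← hs4, add_smul]
    · rw [h0 a b ha hb hab c1 c2 c3 c4, map_zero, ea, eb, smul_lie, lie_smul,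
        h0 a b ha hb hab c1 c2 c3 c4, smul_zero, smul_zero, add_zero]
  have hbb : ∀ a ∈ SS, ∀ b ∈ SS,
      t ⁅Xb a, Xb b⁆ = ⁅t (Xb a), Xb b⁆ + ⁅Xb a, t (Xb b)⁆ := by
    intro a ha b hb
    rcases lt_trichotomy a b with h | rfl | h
    · exact hlt a ha b hb h
    · rw [lie_self, map_zero, heig a ha]
      simp
    · have H := hlt b hb a ha h
      rw [show ⁅Xb a, Xb b⁆ = -⁅Xb b, Xb a⁆ from (lie_skew _ _).symm,
        show ⁅t (Xb a), Xb b⁆ = -⁅Xb b, t (Xb a)⁆ from (lie_skew _ _).symm,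
        show ⁅Xb a, t (Xb b)⁆ = -⁅t (Xb b), Xb a⁆ from (lie_skew _ _).symm,
        map_neg, H]
      abel
  have key1 : ∀ b ∈ SS, ∀ x : n, t ⁅x, Xb b⁆ = ⁅t x, Xb b⁆ + ⁅x, t (Xb b)⁆ := by
    intro b hb x
    have hx : x ∈ Submodule.span ℂ (Set.range (fun i : Fin (k + 3) => Xb (idx i))) := by
      rw [hspan]; trivial
    induction hx using Submodule.span_induction with
    | mem z hz => obtain ⟨i, rfl⟩ := hz; exact hbb _ (hSSi i) b hb
    | zero => simp
    | add u v _ _ hu hv =>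
      rw [add_lie, map_add, map_add, add_lie, add_lie, hu, hv]; abel
    | smul c u _ hu =>
      rw [smul_lie, map_smul, map_smul, smul_lie, smul_lie, hu, smul_add]
  intro x y
  have hy : y ∈ Submodule.span ℂ (Set.range (fun i : Fin (k + 3) => Xb (idx i))) := by
    rw [hspan]; trivial
  induction hy using Submodule.span_induction with
  | mem z hz => obtain ⟨i, rfl⟩ := hz; exact key1 _ (hSSi i) x
  | zero => simp
  | add u v _ _ hu hv =>
    rw [lie_add, map_add, map_add, lie_add, lie_add, hu, hv]; abel
  | smul c u _ hu =>
    rw [lie_smul, map_smul, map_smul, lie_smul, lie_smul, hu, smul_add]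

/-- for `4 ≤ m ≤ k ≤ 2m-2`, the `(k+3)`-dimensional nilpotent Lie algebra
`n = g_m / C^k g_m`, with basis `X̄ 1, ..., X̄ (k+1), X̄ (2m+1), X̄ (2m+2)` and nonzero
brackets `[X̄ 1, X̄ j] = X̄ (j+1)` (`2 ≤ j ≤ k`), `[X̄ 2, X̄ 3] = X̄ (2m+1)`,
`[X̄ 2, X̄ 4] = X̄ (2m+2)`, `[X̄ 1, X̄ (2m+1)] = X̄ (2m+2)`, admits the two commuting
semisimple (diagonal) derivations `t₁`, `t₂` described by their eigenvalues on the
basis. -/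
theorem stmt9 (m k : ℕ) (hm : 4 ≤ m) (hmk : m ≤ k) (hk : k ≤ 2 * m - 2)
    (n : Type*) [LieRing n] [LieAlgebra ℂ n]
    (Xb : ℕ → n)
    (idx : Fin (k + 3) → ℕ)
    (hidx : ∀ i : Fin (k + 3), idx i =
      if i.1 ≤ k then i.1 + 1 else if i.1 = k + 1 then 2 * m + 1 else 2 * m + 2)
    (hindep : LinearIndependent ℂ (fun i : Fin (k + 3) => Xb (idx i)))
    (hspan : Submodule.span ℂ (Set.range (fun i : Fin (k + 3) => Xb (idx i))) = ⊤)
    (h1 : ∀ j, 2 ≤ j → j ≤ k → ⁅Xb 1, Xb j⁆ = Xb (j + 1))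
    (h3 : ⁅Xb 2, Xb 3⁆ = Xb (2 * m + 1))
    (h4 : ⁅Xb 2, Xb 4⁆ = Xb (2 * m + 2))
    (h5 : ⁅Xb 1, Xb (2 * m + 1)⁆ = Xb (2 * m + 2))
    (h0 : ∀ i j, i ∈ Finset.Icc 1 (k + 1) ∪ {2 * m + 1, 2 * m + 2} →
      j ∈ Finset.Icc 1 (k + 1) ∪ {2 * m + 1, 2 * m + 2} → i < j →
      ¬(i = 1 ∧ 2 ≤ j ∧ j ≤ k) → ¬(i = 2 ∧ j = 3) → ¬(i = 2 ∧ j = 4) →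
      ¬(i = 1 ∧ j = 2 * m + 1) → ⁅Xb i, Xb j⁆ = 0)
    (t₁ t₂ : n →ₗ[ℂ] n)
    (ht₁a : t₁ (Xb 1) = Xb 1)
    (ht₁b : t₁ (Xb 2) = ((k : ℂ) - 1) • Xb 2)
    (ht₁c : ∀ j, 3 ≤ j → j ≤ k + 1 → t₁ (Xb j) = ((k : ℂ) - 3 + j) • Xb j)
    (ht₁d : t₁ (Xb (2 * m + 1)) = (2 * (k : ℂ) - 1) • Xb (2 * m + 1))
    (ht₁e : t₁ (Xb (2 * m + 2)) = (2 * (k : ℂ)) • Xb (2 * m + 2))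
    (ht₂a : t₂ (Xb 1) = 0)
    (ht₂b : ∀ j, 2 ≤ j → j ≤ k + 1 → t₂ (Xb j) = Xb j)
    (ht₂c : t₂ (Xb (2 * m + 1)) = (2 : ℂ) • Xb (2 * m + 1))
    (ht₂d : t₂ (Xb (2 * m + 2)) = (2 : ℂ) • Xb (2 * m + 2)) :
    (∀ x y : n, t₁ ⁅x, y⁆ = ⁅t₁ x, y⁆ + ⁅x, t₁ y⁆) ∧
    (∀ x y : n, t₂ ⁅x, y⁆ = ⁅t₂ x, y⁆ + ⁅x, t₂ y⁆) ∧
    t₁ ∘ₗ t₂ = t₂ ∘ₗ t₁ := by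
  -- evaluation lemmas for `stmt9lam1`
  have v1 : stmt9lam1 m k 1 = 1 := by
    unfold stmt9lam1; rw [if_neg (by omega), if_neg (by omega), if_pos rfl]
  have v2 : stmt9lam1 m k 2 = (k : ℂ) - 1 := by
    unfold stmt9lam1
    rw [if_neg (by omega), if_neg (by omega), if_neg (by omega), if_pos rfl]
  have v3 : ∀ j, 3 ≤ j → j ≤ k + 1 → stmt9lam1 m k j = (k : ℂ) - 3 + j := by
    intro j hj3 hjk
    unfold stmt9lam1
    rw [if_neg (by omega), if_neg (by omega), if_neg (by omega), if_neg (by omega)]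
  have v4 : stmt9lam1 m k (2 * m + 1) = 2 * (k : ℂ) - 1 := by
    unfold stmt9lam1; rw [if_pos rfl]
  have v5 : stmt9lam1 m k (2 * m + 2) = 2 * (k : ℂ) := by
    unfold stmt9lam1; rw [if_neg (by omega), if_pos rfl]
  -- evaluation lemmas for `stmt9lam2`
  have w1 : stmt9lam2 k 1 = 0 := by unfold stmt9lam2; rw [if_pos rfl]
  have w2 : ∀ j, 2 ≤ j → j ≤ k + 1 → stmt9lam2 k j = 1 := by
    intro j hj2 hjk
    unfold stmt9lam2; rw [if_neg (by omega), if_pos (by omega)]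
  have w3 : stmt9lam2 k (2 * m + 1) = 2 := by
    unfold stmt9lam2; rw [if_neg (by omega), if_neg (by omega)]
  have w4 : stmt9lam2 k (2 * m + 2) = 2 := by
    unfold stmt9lam2; rw [if_neg (by omega), if_neg (by omega)]
  -- eigenvector statements
  have e1 : ∀ a ∈ Finset.Icc 1 (k + 1) ∪ ({2 * m + 1, 2 * m + 2} : Finset ℕ),
      t₁ (Xb a) = stmt9lam1 m k a • Xb a := by
    intro a ha
    rcases Finset.mem_union.mp ha with h | h
    · rw [Finset.mem_Icc] at h
      rcases (show a = 1 ∨ a = 2 ∨ 3 ≤ a by omega) with rfl | rfl | h3a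
      · rw [v1, one_smul, ht₁a]
      · rw [v2, ht₁b]
      · rw [v3 a h3a h.2, ht₁c a h3a h.2]
    · simp only [Finset.mem_insert, Finset.mem_singleton] at h
      rcases h with rfl | rfl
      · rw [v4, ht₁d]
      · rw [v5, ht₁e]
  have e2 : ∀ a ∈ Finset.Icc 1 (k + 1) ∪ ({2 * m + 1, 2 * m + 2} : Finset ℕ),
      t₂ (Xb a) = stmt9lam2 k a • Xb a := by
    intro a ha
    rcases Finset.mem_union.mp ha with h | h
    · rw [Finset.mem_Icc] at h
      rcases (show a = 1 ∨ 2 ≤ a by omega) with rfl | h2a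
      · rw [w1, zero_smul, ht₂a]
      · rw [w2 a h2a h.2, one_smul, ht₂b a h2a h.2]
    · simp only [Finset.mem_insert, Finset.mem_singleton] at h
      rcases h with rfl | rfl
      · rw [w3, ht₂c]
      · rw [w4, ht₂d]
  -- additivity of eigenvalues
  have s11 : ∀ b, 2 ≤ b → b ≤ k → stmt9lam1 m k 1 + stmt9lam1 m k b = stmt9lam1 m k (b + 1) := by
    intro b hb2 hbk
    rcases (show b = 2 ∨ 3 ≤ b by omega) with rfl | h3b
    · rw [v1, v2, v3 3 le_rfl (by omega)]; push_cast; ring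
    · rw [v1, v3 b h3b (by omega), v3 (b + 1) (by omega) (by omega)]; push_cast; ring
  have s12 : stmt9lam1 m k 2 + stmt9lam1 m k 3 = stmt9lam1 m k (2 * m + 1) := by
    rw [v2, v3 3 le_rfl (by omega), v4]; push_cast; ring
  have s13 : stmt9lam1 m k 2 + stmt9lam1 m k 4 = stmt9lam1 m k (2 * m + 2) := by
    rw [v2, v3 4 (by omega) (by omega), v5]; push_cast; ring
  have s14 : stmt9lam1 m k 1 + stmt9lam1 m k (2 * m + 1) = stmt9lam1 m k (2 * m + 2) := by
    rw [v1, v4, v5]; ring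
  have s21 : ∀ b, 2 ≤ b → b ≤ k → stmt9lam2 k 1 + stmt9lam2 k b = stmt9lam2 k (b + 1) := by
    intro b hb2 hbk
    rw [w1, w2 b hb2 (by omega), w2 (b + 1) (by omega) (by omega)]; ring
  have s22 : stmt9lam2 k 2 + stmt9lam2 k 3 = stmt9lam2 k (2 * m + 1) := by
    rw [w2 2 le_rfl (by omega), w2 3 (by omega) (by omega), w3]; ring
  have s23 : stmt9lam2 k 2 + stmt9lam2 k 4 = stmt9lam2 k (2 * m + 2) := by
    rw [w2 2 le_rfl (by omega), w2 4 (by omega) (by omega), w4]; ring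
  have s24 : stmt9lam2 k 1 + stmt9lam2 k (2 * m + 1) = stmt9lam2 k (2 * m + 2) := by
    rw [w1, w3, w4]; ring
  refine ⟨stmt9aux m k n Xb idx hidx hspan h1 h3 h4 h5 h0 t₁ (stmt9lam1 m k) e1 s11 s12 s13 s14,
    stmt9aux m k n Xb idx hidx hspan h1 h3 h4 h5 h0 t₂ (stmt9lam2 k) e2 s21 s22 s23 s24, ?_⟩
  -- commutation
  have hSSi : ∀ i : Fin (k + 3),
      idx i ∈ Finset.Icc 1 (k + 1) ∪ ({2 * m + 1, 2 * m + 2} : Finset ℕ) := by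
    intro i
    rw [hidx i]
    split_ifs with hh hh'
    · exact Finset.mem_union_left _ (Finset.mem_Icc.mpr ⟨by omega, by omega⟩)
    · exact Finset.mem_union_right _ (by simp)
    · exact Finset.mem_union_right _ (by simp)
  have comm : ∀ x : n, t₁ (t₂ x) = t₂ (t₁ x) := by
    intro x
    have hx : x ∈ Submodule.span ℂ (Set.range (fun i : Fin (k + 3) => Xb (idx i))) := by
      rw [hspan]; trivial
    induction hx using Submodule.span_induction with
    | mem z hz =>
      obtain ⟨i, rfl⟩ := hz
      rw [e2 _ (hSSi i), map_smul, e1 _ (hSSi i), map_smul, e2 _ (hSSi i),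
        smul_smul, smul_smul, mul_comm]
    | zero => simp
    | add u v _ _ hu hv => rw [map_add, map_add, map_add, map_add, hu, hv]
    | smul c u _ hu => rw [map_smul, map_smul, map_smul, map_smul, hu]
  exact LinearMap.ext fun x => comm x
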